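/- For every p ≥ 1 and all nonzero a, b, c ∈ [0,1]^p, the relaxed triangle inequality Δ_DML1(a,c) ≤ ρ (Δ_DML1(a,b) + Δ_DML1(b,c)) holds with ρ = (1 + √5)/2. -/

import Mathlib

open Finset

/-- The L¹ norm of a vector. -/
noncomputable def l1 {p : ℕ} (z : Fin p → ℝ) : ℝ := ∑ i, |z i|

/-- The first Dice semimetric loss. -/
noncomputable def DML1 {p : ℕ} (x y : Fin p → ℝ) : ℝ :=
  1 - (l1 (x + y) - l1 (x - y)) / l1 (x + y)

/-- The second Dice semimetric loss. -/
noncomputable def DML2 {p : ℕ} (x y : Fin p → ℝ) : ℝ :=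
  1 - 2 * l1 (x * y) / (2 * l1 (x * y) + l1 (x - y))

lemma l1_nonneg {p : ℕ} (z : Fin p → ℝ) : 0 ≤ l1 z :=
  Finset.sum_nonneg fun i _ => abs_nonneg _

lemma l1_pos {p : ℕ} {z : Fin p → ℝ} (hz : z ≠ 0) : 0 < l1 z := by
  have h : ∃ i, z i ≠ 0 := by
    by_contra h; push_neg at h; exact hz (funext h)
  obtain ⟨i, hi⟩ := h
  have h1 : 0 < |z i| := abs_pos.2 hi
  have h2 : |z i| ≤ l1 z :=
    Finset.single_le_sum (f := fun j => |z j|) (fun j _ => abs_nonneg _) (mem_univ i)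
  linarith

lemma l1_add_of_nonneg {p : ℕ} {x y : Fin p → ℝ} (hx : ∀ i, 0 ≤ x i)
    (hy : ∀ i, 0 ≤ y i) : l1 (x + y) = l1 x + l1 y := by
  unfold l1
  rw [← Finset.sum_add_distrib]
  refine Finset.sum_congr rfl fun i _ => ?_
  rw [Pi.add_apply, abs_of_nonneg (by linarith [hx i, hy i]),
    abs_of_nonneg (hx i), abs_of_nonneg (hy i)]

lemma DML1_eq {p : ℕ} {x y : Fin p → ℝ} (hx : ∀ i, 0 ≤ x i) (hy : ∀ i, 0 ≤ y i)
    (hS : 0 < l1 x + l1 y) : DML1 x y = l1 (x - y) / (l1 x + l1 y) := by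
  unfold DML1
  rw [l1_add_of_nonneg hx hy]
  field_simp
  ring

lemma l1_sub_triangle {p : ℕ} (a b c : Fin p → ℝ) :
    l1 (a - c) ≤ l1 (a - b) + l1 (b - c) := by
  unfold l1
  rw [← Finset.sum_add_distrib]
  refine Finset.sum_le_sum fun i _ => ?_
  simp only [Pi.sub_apply]
  exact abs_sub_le _ _ _

lemma l1_sub_le {p : ℕ} (a c : Fin p → ℝ) : l1 (a - c) ≤ l1 a + l1 c := by
  unfold l1
  rw [← Finset.sum_add_distrib]
  refine Finset.sum_le_sum fun i _ => ?_
  simp only [Pi.sub_apply]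
  exact abs_sub _ _

lemma l1_sub_ge {p : ℕ} (a b : Fin p → ℝ) : l1 b - l1 a ≤ l1 (a - b) := by
  unfold l1
  rw [← Finset.sum_sub_distrib]
  refine Finset.sum_le_sum fun i _ => ?_
  simp only [Pi.sub_apply]
  calc |b i| - |a i| ≤ |b i - a i| := abs_sub_abs_le_abs_sub _ _
    _ = |a i - b i| := abs_sub_comm _ _

set_option maxHeartbeats 1000000 in
lemma key (A B C u v w : ℝ) (hA : 0 < A) (hB : 0 < B) (hC : 0 < C)
    (hu : 0 ≤ u) (hv : 0 ≤ v) (hw1 : w ≤ u + v) (hw2 : w ≤ A + C)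
    (hu2 : B - A ≤ u) (hv2 : B - C ≤ v) :
    w/(A+C) ≤ (1+Real.sqrt 5)/2 * (u/(A+B) + v/(B+C)) := by
  set s := Real.sqrt 5 with hsdef
  have hs : s^2 = 5 := Real.sq_sqrt (by norm_num)
  have hs2 : 2 ≤ s := by nlinarith [Real.sqrt_nonneg 5]
  have hs3 : s ≤ 9/4 := by nlinarith
  have hAB : 0 < A + B := by linarith
  have hBC : 0 < B + C := by linarith
  have hAC : 0 < A + C := by linarith
  have main : w * ((A+B)*(B+C)) ≤ ((1+s)/2 * (u*(B+C) + v*(A+B))) * (A+C) := by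
    rcases le_or_gt (A+B) ((1+s)/2*(A+C)) with h1 | h1
    · rcases le_or_gt (B+C) ((1+s)/2*(A+C)) with h2 | h2
      · have hx1 : w * ((A+B)*(B+C)) ≤ (u+v) * ((A+B)*(B+C)) :=
          mul_le_mul_of_nonneg_right hw1 (mul_pos hAB hBC).le
        have hx2 : (u*(B+C)) * (A+B) ≤ (u*(B+C)) * ((1+s)/2*(A+C)) :=
          mul_le_mul_of_nonneg_left h1 (mul_nonneg hu hBC.le)
        have hx3 : (v*(A+B)) * (B+C) ≤ (v*(A+B)) * ((1+s)/2*(A+C)) :=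
          mul_le_mul_of_nonneg_left h2 (mul_nonneg hv hAB.le)
        nlinarith [hx1, hx2, hx3]
      · -- B + C > ρ(A+C)
        have hD : 0 ≤ B - ((s-1)*C+(1+s)*A)/2 := by linarith
        have e1 : (1+s)/2*(2*B^2-2*A*C) - (A+B)*(B+C) =
            s*(B - ((s-1)*C+(1+s)*A)/2)^2
              + ((4-s)*C+(4+s)*A)*(B - ((s-1)*C+(1+s)*A)/2)
              + (s-2)*(C-(s+2)*A)^2 := by
          linear_combination (C*B + B*A - C^2*s/4 + 2*C*A - C*A*s/2 - 2*A^2 - 5*A^2*s/4) * hs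
        have hd : (A+B)*(B+C) ≤ (1+s)/2*(2*B^2-2*A*C) := by
          nlinarith [e1, mul_nonneg (by linarith : (0:ℝ) ≤ s) (sq_nonneg (B - ((s-1)*C+(1+s)*A)/2)),
            mul_nonneg (by nlinarith : (0:ℝ) ≤ (4-s)*C+(4+s)*A) hD,
            mul_nonneg (by linarith : (0:ℝ) ≤ s-2) (sq_nonneg (C-(s+2)*A))]
        have hsum : 2*B^2-2*A*C ≤ u*(B+C)+v*(A+B) := by
          have ha1 : (B-A)*(B+C) ≤ u*(B+C) := mul_le_mul_of_nonneg_right hu2 hBC.le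
          have ha2 : (B-C)*(A+B) ≤ v*(A+B) := mul_le_mul_of_nonneg_right hv2 hAB.le
          nlinarith [ha1, ha2]
        have hc1 : w * ((A+B)*(B+C)) ≤ (A+C) * ((A+B)*(B+C)) :=
          mul_le_mul_of_nonneg_right hw2 (mul_pos hAB hBC).le
        have hc2 : ((A+B)*(B+C)) * (A+C) ≤ ((1+s)/2*(2*B^2-2*A*C)) * (A+C) :=
          mul_le_mul_of_nonneg_right hd hAC.le
        have hc3 : ((1+s)/2*(2*B^2-2*A*C)) * (A+C) ≤ ((1+s)/2*(u*(B+C)+v*(A+B))) * (A+C) :=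
          mul_le_mul_of_nonneg_right
            (mul_le_mul_of_nonneg_left hsum (by linarith : (0:ℝ) ≤ (1+s)/2)) hAC.le
        nlinarith [hc1, hc2, hc3]
    · -- A + B > ρ(A+C)
      have hD : 0 ≤ B - ((s-1)*A+(1+s)*C)/2 := by linarith
      have e1 : (1+s)/2*(2*B^2-2*A*C) - (A+B)*(B+C) =
          s*(B - ((s-1)*A+(1+s)*C)/2)^2
            + ((4-s)*A+(4+s)*C)*(B - ((s-1)*A+(1+s)*C)/2)
            + (s-2)*(A-(s+2)*C)^2 := by
        linear_combination (A*B + B*C - A^2*s/4 + 2*A*C - A*C*s/2 - 2*C^2 - 5*C^2*s/4) * hs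
      have hd : (A+B)*(B+C) ≤ (1+s)/2*(2*B^2-2*A*C) := by
        nlinarith [e1, mul_nonneg (by linarith : (0:ℝ) ≤ s) (sq_nonneg (B - ((s-1)*A+(1+s)*C)/2)),
          mul_nonneg (by nlinarith : (0:ℝ) ≤ (4-s)*A+(4+s)*C) hD,
          mul_nonneg (by linarith : (0:ℝ) ≤ s-2) (sq_nonneg (A-(s+2)*C))]
      have hsum : 2*B^2-2*A*C ≤ u*(B+C)+v*(A+B) := by
        have ha1 : (B-A)*(B+C) ≤ u*(B+C) := mul_le_mul_of_nonneg_right hu2 hBC.le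
        have ha2 : (B-C)*(A+B) ≤ v*(A+B) := mul_le_mul_of_nonneg_right hv2 hAB.le
        nlinarith [ha1, ha2]
      have hc1 : w * ((A+B)*(B+C)) ≤ (A+C) * ((A+B)*(B+C)) :=
        mul_le_mul_of_nonneg_right hw2 (mul_pos hAB hBC).le
      have hc2 : ((A+B)*(B+C)) * (A+C) ≤ ((1+s)/2*(2*B^2-2*A*C)) * (A+C) :=
        mul_le_mul_of_nonneg_right hd hAC.le
      have hc3 : ((1+s)/2*(2*B^2-2*A*C)) * (A+C) ≤ ((1+s)/2*(u*(B+C)+v*(A+B))) * (A+C) :=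
        mul_le_mul_of_nonneg_right
          (mul_le_mul_of_nonneg_left hsum (by linarith : (0:ℝ) ≤ (1+s)/2)) hAC.le
      nlinarith [hc1, hc2, hc3]
  have h1 : w/(A+C) ≤ ((1+s)/2 * (u*(B+C) + v*(A+B)))/((A+B)*(B+C)) := by
    rw [div_le_div_iff₀ hAC (by positivity)]
    exact main
  refine h1.trans (le_of_eq ?_)
  field_simp

theorem dml1_relaxed_triangle {p : ℕ} (hp : 1 ≤ p) (a b c : Fin p → ℝ)
    (ha : ∀ i, 0 ≤ a i ∧ a i ≤ 1) (hb : ∀ i, 0 ≤ b i ∧ b i ≤ 1)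
    (hc : ∀ i, 0 ≤ c i ∧ c i ≤ 1)
    (ha0 : a ≠ 0) (hb0 : b ≠ 0) (hc0 : c ≠ 0) :
    DML1 a c ≤ (1 + Real.sqrt 5) / 2 * (DML1 a b + DML1 b c) := by
  have hA := l1_pos ha0
  have hB := l1_pos hb0
  have hC := l1_pos hc0
  rw [DML1_eq (fun i => (ha i).1) (fun i => (hc i).1) (by linarith),
    DML1_eq (fun i => (ha i).1) (fun i => (hb i).1) (by linarith),
    DML1_eq (fun i => (hb i).1) (fun i => (hc i).1) (by linarith)]
  have hcomm : l1 (b - c) = l1 (c - b) := by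
    unfold l1
    refine Finset.sum_congr rfl fun i _ => ?_
    simp only [Pi.sub_apply]
    exact abs_sub_comm _ _
  exact key (l1 a) (l1 b) (l1 c) (l1 (a-b)) (l1 (b-c)) (l1 (a-c)) hA hB hC
    (l1_nonneg _) (l1_nonneg _) (l1_sub_triangle a b c) (l1_sub_le a c)
    (l1_sub_ge a b) (hcomm ▸ l1_sub_ge c b)
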